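/- Let M be a nonzero p×q complex matrix. Then the infimum of ‖Δ‖ over all q×p complex matrices Δ such that det(I_p − M·Δ) = 0 equals ‖M‖⁻¹, where ‖·‖ is the L2 operator norm; moreover this infimum is attained by some Δ with ‖Δ‖ = ‖M‖⁻¹ and det(I_p − M·Δ) = 0. -/

import Mathlib

open scoped Matrix.Norms.L2Operator
open Matrix

noncomputable abbrev eucCLM {p q : ℕ} (A : Matrix (Fin p) (Fin q) ℂ) :
    EuclideanSpace ℂ (Fin q) →L[ℂ] EuclideanSpace ℂ (Fin p) :=
  (Matrix.toEuclideanLin.trans LinearMap.toContinuousLinearMap) A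

lemma euc_norm {p q : ℕ} (A : Matrix (Fin p) (Fin q) ℂ) : ‖A‖ = ‖eucCLM A‖ :=
  Matrix.l2_opNorm_def A

lemma euc_apply {p q : ℕ} (A : Matrix (Fin p) (Fin q) ℂ) (x : EuclideanSpace ℂ (Fin q)) :
    eucCLM A x = (WithLp.equiv 2 (Fin p → ℂ)).symm (A *ᵥ (WithLp.equiv 2 (Fin q → ℂ)) x) := rfl

/-- Lower bound: any destabilizing `Δ` has `‖Δ‖ ≥ ‖M‖⁻¹`. -/
lemma destab_lower_bound {p q : ℕ} (M : Matrix (Fin p) (Fin q) ℂ)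
    (Δ : Matrix (Fin q) (Fin p) ℂ)
    (hdet : ((1 : Matrix (Fin p) (Fin p) ℂ) - M * Δ).det = 0) : ‖M‖⁻¹ ≤ ‖Δ‖ := by
  obtain ⟨v, hv, hveq⟩ := (Matrix.exists_mulVec_eq_zero_iff).2 hdet
  have hMv : M *ᵥ (Δ *ᵥ v) = v := by
    have := hveq
    rw [Matrix.sub_mulVec, Matrix.one_mulVec, sub_eq_zero] at this
    rw [Matrix.mulVec_mulVec]; exact this.symm
  set ve : EuclideanSpace ℂ (Fin p) := (WithLp.equiv 2 (Fin p → ℂ)).symm v with hve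
  have hvne : ve ≠ 0 := by simpa [hve] using hv
  have h1 : ‖ve‖ ≤ ‖M‖ * (‖Δ‖ * ‖ve‖) := by
    calc ‖ve‖ = ‖eucCLM M (eucCLM Δ ve)‖ := by
          rw [euc_apply, euc_apply]
          simp [hve, hMv]
      _ ≤ ‖M‖ * ‖eucCLM Δ ve‖ := by
          rw [euc_norm M]; exact (eucCLM M).le_opNorm _
      _ ≤ ‖M‖ * (‖Δ‖ * ‖ve‖) := by
          have h := (eucCLM Δ).le_opNorm ve
          rw [← euc_norm Δ] at h
          exact mul_le_mul_of_nonneg_left h (norm_nonneg M)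
  have hvpos : 0 < ‖ve‖ := norm_pos_iff.2 hvne
  have h2 : 1 ≤ ‖M‖ * ‖Δ‖ := by
    have := (mul_le_mul_iff_of_pos_right hvpos).1
      (by simpa [mul_assoc] using h1 : 1 * ‖ve‖ ≤ ‖M‖ * ‖Δ‖ * ‖ve‖)
    simpa using this
  have hMpos : 0 < ‖M‖ := by
    by_contra h
    push_neg at h
    have : ‖M‖ * ‖Δ‖ ≤ 0 := mul_nonpos_of_nonpos_of_nonneg h (norm_nonneg _)
    linarith
  rw [inv_le_iff_one_le_mul₀ hMpos]
  linarith

/-- There is a destabilizing `Δ` with `‖Δ‖ = ‖M‖⁻¹`. -/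
lemma destab_exists {p q : ℕ} (M : Matrix (Fin p) (Fin q) ℂ) (hM : M ≠ 0) :
    ∃ Δ : Matrix (Fin q) (Fin p) ℂ,
      ‖Δ‖ = ‖M‖⁻¹ ∧ ((1 : Matrix (Fin p) (Fin p) ℂ) - M * Δ).det = 0 := by
  have hq : q ≠ 0 := by
    rintro rfl
    exact hM (by ext i j; exact j.elim0)
  haveI : NeZero q := ⟨hq⟩
  have hMpos : 0 < ‖M‖ := norm_pos_iff.2 hM
  set c := ‖M‖ with hc
  -- the unit sphere is compact and nonempty; maximize ‖eucCLM M x‖ over it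
  set S : Set (EuclideanSpace ℂ (Fin q)) := Metric.sphere 0 1 with hS
  have hSne : S.Nonempty := by
    refine ⟨EuclideanSpace.single (0 : Fin q) (1 : ℂ), ?_⟩
    simp [hS, EuclideanSpace.norm_single]
  obtain ⟨u, huS, hmax⟩ := (isCompact_sphere (0 : EuclideanSpace ℂ (Fin q)) 1).exists_isMaxOn
    hSne ((eucCLM M).continuous.norm.continuousOn)
  have hu1 : ‖u‖ = 1 := by simpa [hS] using huS
  set v : EuclideanSpace ℂ (Fin p) := eucCLM M u with hv
  -- the maximum is the operator norm
  have hnorm : ‖v‖ = c := by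
    refine le_antisymm ?_ ?_
    · rw [hc, euc_norm M]
      exact (eucCLM M).unit_le_opNorm u hu1.le
    · rw [hc, euc_norm M]
      refine (eucCLM M).opNorm_le_bound (norm_nonneg v) fun x => ?_
      rcases eq_or_ne x 0 with rfl | hx
      · simp
      · have hxpos : 0 < ‖x‖ := norm_pos_iff.2 hx
        have hmem : (((‖x‖ : ℂ))⁻¹ • x) ∈ S := by
          rw [hS, mem_sphere_zero_iff_norm, norm_smul, norm_inv, Complex.norm_real,
            Real.norm_of_nonneg (norm_nonneg x), inv_mul_cancel₀ hxpos.ne']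
        have h3 := hmax hmem
        have h4 : ‖eucCLM M (((‖x‖ : ℂ))⁻¹ • x)‖ = ‖x‖⁻¹ * ‖eucCLM M x‖ := by
          rw [(eucCLM M).map_smul, norm_smul, norm_inv, Complex.norm_real,
            Real.norm_of_nonneg (norm_nonneg x)]
        have h2 : ‖x‖⁻¹ * ‖eucCLM M x‖ ≤ ‖v‖ := by rw [← h4]; exact h3
        calc ‖eucCLM M x‖ = ‖x‖ * (‖x‖⁻¹ * ‖eucCLM M x‖) := by
              field_simp
          _ ≤ ‖x‖ * ‖v‖ := mul_le_mul_of_nonneg_left h2 hxpos.le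
          _ = ‖v‖ * ‖x‖ := mul_comm _ _
  -- the destabilizing matrix
  set Δ : Matrix (Fin q) (Fin p) ℂ :=
    Matrix.of (fun i j => ((c : ℂ) ^ 2)⁻¹ * u i * (starRingEnd ℂ) (v j)) with hΔ
  -- action of Δ
  have hΔvec : ∀ x : EuclideanSpace ℂ (Fin p),
      eucCLM Δ x = ((((c : ℂ) ^ 2)⁻¹ * inner ℂ v x) • u : EuclideanSpace ℂ (Fin q)) := by
    intro x
    ext i
    rw [euc_apply]
    show (Δ *ᵥ (x : Fin p → ℂ)) i = _
    simp only [Matrix.mulVec, dotProduct, hΔ, Matrix.of_apply, PiLp.smul_apply,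
      smul_eq_mul, PiLp.inner_apply, RCLike.inner_apply, Finset.mul_sum, Finset.sum_mul]
    exact Finset.sum_congr rfl fun j _ => by ring
  have hinnervv : (inner ℂ v v : ℂ) = (c : ℂ) ^ 2 := by
    rw [inner_self_eq_norm_sq_to_K, hnorm]
    norm_num
  have hcne : ((c : ℂ) ^ 2) ≠ 0 :=
    pow_ne_zero 2 (Complex.ofReal_ne_zero.mpr hMpos.ne')
  -- Δ v = u
  have hΔv : eucCLM Δ v = u := by
    rw [hΔvec v, hinnervv, inv_mul_cancel₀ hcne, one_smul]
  -- M (Δ v) = v, hence det (1 - M Δ) = 0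
  have hdet : ((1 : Matrix (Fin p) (Fin p) ℂ) - M * Δ).det = 0 := by
    rw [← Matrix.exists_mulVec_eq_zero_iff]
    refine ⟨(WithLp.equiv 2 (Fin p → ℂ)) v, ?_, ?_⟩
    · intro h
      have : v = 0 := by
        apply (WithLp.equiv 2 (Fin p → ℂ)).injective
        simpa using h
      rw [this] at hnorm
      simp at hnorm
      exact hMpos.ne' hnorm.symm
    · have hMu : M *ᵥ (WithLp.equiv 2 (Fin q → ℂ)) u = (WithLp.equiv 2 (Fin p → ℂ)) v := rfl
      have hΔv' : Δ *ᵥ (WithLp.equiv 2 (Fin p → ℂ)) v = (WithLp.equiv 2 (Fin q → ℂ)) u :=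
        congrArg (WithLp.equiv 2 (Fin q → ℂ)) hΔv
      rw [Matrix.sub_mulVec, Matrix.one_mulVec, ← Matrix.mulVec_mulVec, hΔv', hMu, sub_self]
  -- ‖Δ‖ ≤ c⁻¹
  have hub : ‖Δ‖ ≤ c⁻¹ := by
    rw [euc_norm Δ]
    refine (eucCLM Δ).opNorm_le_bound (inv_nonneg.2 hMpos.le) fun x => ?_
    rw [hΔvec x, norm_smul, hu1, mul_one, norm_mul, norm_inv]
    have hCS : ‖(inner ℂ v x : ℂ)‖ ≤ ‖v‖ * ‖x‖ := norm_inner_le_norm v x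
    have hnc : ‖((c : ℂ) ^ 2)‖ = c ^ 2 := by
      rw [norm_pow, Complex.norm_real, Real.norm_of_nonneg hMpos.le]
    rw [hnc, hnorm] at *
    calc (c ^ 2)⁻¹ * ‖(inner ℂ v x : ℂ)‖ ≤ (c ^ 2)⁻¹ * (c * ‖x‖) := by
          exact mul_le_mul_of_nonneg_left hCS (by positivity)
      _ = c⁻¹ * ‖x‖ := by
          field_simp
  exact ⟨Δ, le_antisymm hub (destab_lower_bound M Δ hdet), hdet⟩

/-- Destabilizing-feedback characterization of the L2 operator norm of a matrix:
for `M ≠ 0`, `inf {‖Δ‖ : det(I − MΔ) = 0} = ‖M‖⁻¹`, and the infimum is attained. -/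
theorem destabilizing_feedback_characterization
    {p q : ℕ} (M : Matrix (Fin p) (Fin q) ℂ) (hM : M ≠ 0) :
    sInf {x : ℝ | ∃ Δ : Matrix (Fin q) (Fin p) ℂ,
        ‖Δ‖ = x ∧ ((1 : Matrix (Fin p) (Fin p) ℂ) - M * Δ).det = 0} = ‖M‖⁻¹ ∧
    ∃ Δ : Matrix (Fin q) (Fin p) ℂ,
        ‖Δ‖ = ‖M‖⁻¹ ∧ ((1 : Matrix (Fin p) (Fin p) ℂ) - M * Δ).det = 0 := by
  obtain ⟨Δ₀, hΔ₀, hdet₀⟩ := destab_exists M hM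
  refine ⟨?_, Δ₀, hΔ₀, hdet₀⟩
  have hlb : ∀ x ∈ {x : ℝ | ∃ Δ : Matrix (Fin q) (Fin p) ℂ,
      ‖Δ‖ = x ∧ ((1 : Matrix (Fin p) (Fin p) ℂ) - M * Δ).det = 0}, ‖M‖⁻¹ ≤ x := by
    rintro x ⟨Δ, rfl, hd⟩
    exact destab_lower_bound M Δ hd
  have hmem : ‖M‖⁻¹ ∈ {x : ℝ | ∃ Δ : Matrix (Fin q) (Fin p) ℂ,
      ‖Δ‖ = x ∧ ((1 : Matrix (Fin p) (Fin p) ℂ) - M * Δ).det = 0} := ⟨Δ₀, hΔ₀, hdet₀⟩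
  exact le_antisymm (csInf_le ⟨‖M‖⁻¹, hlb⟩ hmem) (le_csInf ⟨_, hmem⟩ hlb)
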